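/- Let X be a real Banach space satisfying property (BD): for each x in the unit sphere S_X, sup{x*(x) : x* ∈ ext(B_{X*}) \ D(x)} < 1. Then X is a polyhedral space. -/

import Mathlib

set_option maxHeartbeats 1000000
set_option synthInstance.maxHeartbeats 100000


open Filter Topology Metric
open scoped ENNReal

noncomputable section

/-- The space `ℓ₁` of absolutely summable real sequences. -/
abbrev EllOne : Type := lp (fun _ : ℕ => ℝ) 1

/-- The subspace of `ℓ∞` consisting of convergent real sequences. -/
def convSeq : Subspace ℝ (lp (fun _ : ℕ => ℝ) ∞) where
  carrier := {f | ∃ l : ℝ, Tendsto (fun n => f n) atTop (𝓝 l)}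
  add_mem' := by
    rintro f g ⟨a, ha⟩ ⟨b, hb⟩
    exact ⟨a + b, by simpa [lp.coeFn_add] using ha.add hb⟩
  zero_mem' := ⟨0, by simp [lp.coeFn_zero]⟩
  smul_mem' := by
    rintro c f ⟨a, ha⟩
    exact ⟨c * a, by simpa [lp.coeFn_smul] using ha.const_mul c⟩

/-- The Banach space `c` of convergent real sequences with the sup norm,
realized as a subspace of `ℓ∞`. -/
abbrev SpaceC : Type := ↥convSeq

/-- A normed space is polyhedral if the unit ball of each of its
finite-dimensional subspaces is a polytope (the convex hull of finitely many points). -/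
def IsPolyhedralSpace (X : Type*) [NormedAddCommGroup X] [NormedSpace ℝ X] : Prop :=
  ∀ Y : Subspace ℝ X, FiniteDimensional ℝ Y →
    ∃ F : Set Y, F.Finite ∧ closedBall (0 : Y) 1 = convexHull ℝ F

/-- The set of extreme points of the closed unit ball of the dual of `X`. -/
def extBdual (X : Type*) [NormedAddCommGroup X] [NormedSpace ℝ X] :
    Set (StrongDual ℝ X) :=
  Set.extremePoints ℝ (closedBall (0 : StrongDual ℝ X) 1)

/-- `D(x) = {x* ∈ S_{X*} : x*(x) = 1}`. -/
def Dface {X : Type*} [NormedAddCommGroup X] [NormedSpace ℝ X] (x : X) :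
    Set (StrongDual ℝ X) :=
  {f | ‖f‖ = 1 ∧ f x = 1}

namespace BDPoly
open Set

variable {X : Type*} [NormedAddCommGroup X] [NormedSpace ℝ X]

noncomputable instance : LocallyConvexSpace ℝ (WeakDual ℝ X) :=
  (topDualPairing ℝ X).weakBilin_withSeminorms.toLocallyConvexSpace

noncomputable instance instNACGDualSub (Y : Submodule ℝ X) : NormedAddCommGroup (StrongDual ℝ Y) :=
  ContinuousLinearMap.toNormedAddCommGroup

noncomputable instance instNSDualSub (Y : Submodule ℝ X) : NormedSpace ℝ (StrongDual ℝ Y) :=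
  ContinuousLinearMap.toNormedSpace

/-- Property (BD) as a convenient statement. -/
def BD (X : Type*) [NormedAddCommGroup X] [NormedSpace ℝ X] : Prop :=
  ∀ x : X, ‖x‖ = 1 →
    sSup ((fun f : StrongDual ℝ X => f x) '' (extBdual X \ Dface x)) < 1

lemma extBdual_norm_le {f : StrongDual ℝ X} (hf : f ∈ extBdual X) : ‖f‖ ≤ 1 :=
  mem_closedBall_zero_iff.1 (extremePoints_subset hf)

lemma bd_key (hbd : BD X) (x : X) (hx : ‖x‖ = 1) :
    ∃ θ : ℝ, θ < 1 ∧ ∀ k ∈ extBdual X, k x ≠ 1 → k x ≤ θ := by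
  refine ⟨_, hbd x hx, ?_⟩
  intro k hk hkx
  apply le_csSup
  · refine ⟨1, ?_⟩
    rintro v ⟨f, hf, rfl⟩
    calc (f x : ℝ) ≤ |f x| := le_abs_self _
    _ ≤ ‖f‖ * ‖x‖ := f.le_opNorm x
    _ ≤ 1 := by
        rw [hx, mul_one]; exact extBdual_norm_le hf.1
  · exact ⟨k, ⟨hk, fun hD => hkx hD.2⟩, rfl⟩

lemma combo_eq_max {a b p q M : ℝ} (ha : 0 < a) (hb : 0 < b) (hab : a + b = 1)
    (hp : p ≤ M) (hq : q ≤ M) (h : a * p + b * q = M) : p = M ∧ q = M := by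
  constructor
  · by_contra hne
    have hplt : p < M := lt_of_le_of_ne hp hne
    have hM : a * M + b * M = M := by rw [← add_mul, hab, one_mul]
    nlinarith [mul_lt_mul_of_pos_left hplt ha, mul_le_mul_of_nonneg_left hq hb.le]
  · by_contra hne
    have hqlt : q < M := lt_of_le_of_ne hq hne
    have hM : a * M + b * M = M := by rw [← add_mul, hab, one_mul]
    nlinarith [mul_lt_mul_of_pos_left hqlt hb, mul_le_mul_of_nonneg_left hp ha.le]

/-- Existence of an extreme point of the dual unit ball inside a weak-star closed face. -/
lemma exists_extreme_face {M : Set (StrongDual ℝ X)}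
    (hne : M.Nonempty)
    (hcl : IsClosed (show Set (WeakDual ℝ X) from M))
    (hext : IsExtreme ℝ (closedBall (0 : StrongDual ℝ X) 1) M) :
    ∃ e ∈ extBdual X, e ∈ M := by
  set B : Set (StrongDual ℝ X) := closedBall 0 1 with hBdef
  have hBw : IsCompact (show Set (WeakDual ℝ X) from B) :=
    WeakDual.isCompact_closedBall (𝕜 := ℝ) (E := X) 0 1
  have hMw : IsCompact (show Set (WeakDual ℝ X) from M) :=
    hBw.of_isClosed_subset hcl hext.1
  obtain ⟨e, he⟩ := hMw.extremePoints_nonempty hne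
  have hext' : IsExtreme ℝ (show Set (WeakDual ℝ X) from B)
      (show Set (WeakDual ℝ X) from M) := hext
  have : e ∈ extremePoints ℝ (show Set (WeakDual ℝ X) from B) :=
    hext'.extremePoints_subset_extremePoints he
  exact ⟨e, this, extremePoints_subset he⟩

/-- Every nonzero vector is normed by an extreme point of the dual unit ball. -/
lemma exists_extreme_norming (w : X) (hw : w ≠ 0) :
    ∃ e ∈ extBdual X, e w = ‖w‖ := by
  set M : Set (StrongDual ℝ X) := closedBall 0 1 ∩ {k | k w = ‖w‖} with hM
  have hne : M.Nonempty := by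
    obtain ⟨g, hg1, hgw⟩ := exists_dual_vector ℝ w (norm_ne_zero_iff.2 hw)
    exact ⟨g, mem_closedBall_zero_iff.2 hg1.le, by simpa using hgw⟩
  have hcl : IsClosed (show Set (WeakDual ℝ X) from M) := by
    apply IsClosed.inter
    · exact WeakDual.isClosed_closedBall 0 1
    · exact isClosed_eq (WeakDual.eval_continuous w) continuous_const
  have hext : IsExtreme ℝ (closedBall (0 : StrongDual ℝ X) 1) M := by
    constructor
    · exact inter_subset_left
    · rintro k₁ hk₁ k₂ hk₂ k ⟨hkB, hkw⟩ ⟨a, b, ha, hb, hab, rfl⟩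
      have h1 : k₁ w ≤ ‖w‖ := by
        calc k₁ w ≤ |k₁ w| := le_abs_self _
        _ ≤ ‖k₁‖ * ‖w‖ := k₁.le_opNorm w
        _ ≤ 1 * ‖w‖ := by
            have := mem_closedBall_zero_iff.1 hk₁
            exact mul_le_mul_of_nonneg_right this (norm_nonneg w)
        _ = ‖w‖ := one_mul _
      have h2 : k₂ w ≤ ‖w‖ := by
        calc k₂ w ≤ |k₂ w| := le_abs_self _
        _ ≤ ‖k₂‖ * ‖w‖ := k₂.le_opNorm w
        _ ≤ 1 * ‖w‖ := by
            have := mem_closedBall_zero_iff.1 hk₂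
            exact mul_le_mul_of_nonneg_right this (norm_nonneg w)
        _ = ‖w‖ := one_mul _
      have hsum : a * k₁ w + b * k₂ w = ‖w‖ := by
        simpa using hkw
      obtain ⟨e1, e2⟩ := combo_eq_max ha hb hab h1 h2 hsum
      exact ⟨hk₁, e1⟩
  obtain ⟨e, heE, heM⟩ := exists_extreme_face hne hcl hext
  exact ⟨e, heE, heM.2⟩

/-- Every extreme point of the dual ball of a subspace extends to an extreme point of the
dual ball of the whole space. -/
lemma exists_extreme_restrict (Y : Subspace ℝ X) (g : StrongDual ℝ Y)
    (hg : g ∈ extremePoints ℝ (closedBall (0 : StrongDual ℝ Y) 1)) :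
    ∃ e ∈ extBdual X, ∀ y : Y, e y = g y := by
  set M : Set (StrongDual ℝ X) := closedBall 0 1 ∩ {k | ∀ y : Y, k y = g y} with hM
  have hgB : ‖g‖ ≤ 1 := mem_closedBall_zero_iff.1 (extremePoints_subset hg)
  have hne : M.Nonempty := by
    obtain ⟨h, hhy, hhn⟩ := exists_extension_norm_eq (Y : Subspace ℝ X) g
    exact ⟨h, mem_closedBall_zero_iff.2 (by rw [hhn]; exact hgB), hhy⟩
  have hcl : IsClosed (show Set (WeakDual ℝ X) from M) := by
    apply IsClosed.inter
    · exact WeakDual.isClosed_closedBall 0 1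
    · have h2 : IsClosed {k : WeakDual ℝ X | ∀ y : Y, k (y : X) = g y} := by
        have heq : {k : WeakDual ℝ X | ∀ y : Y, k (y : X) = g y}
            = ⋂ y : Y, {k : WeakDual ℝ X | k (y : X) = g y} := by
          ext k; simp
        rw [heq]
        exact isClosed_iInter fun y =>
          isClosed_eq (WeakDual.eval_continuous ((y : X))) continuous_const
      exact h2
  have hres : ∀ k : StrongDual ℝ X, k ∈ closedBall (0 : StrongDual ℝ X) 1 →
      (k.comp Y.subtypeL) ∈ closedBall (0 : StrongDual ℝ Y) 1 := by
    intro k hk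
    refine mem_closedBall_zero_iff.mpr ?_
    calc ‖k.comp Y.subtypeL‖ ≤ ‖k‖ * ‖Y.subtypeL‖ := k.opNorm_comp_le _
    _ ≤ 1 * 1 := by
        apply mul_le_mul (mem_closedBall_zero_iff.1 hk) (Submodule.norm_subtypeL_le Y)
          (ContinuousLinearMap.opNorm_nonneg _) zero_le_one
    _ = 1 := one_mul _
  have hext : IsExtreme ℝ (closedBall (0 : StrongDual ℝ X) 1) M := by
    constructor
    · exact inter_subset_left
    · rintro k₁ hk₁ k₂ hk₂ k ⟨hkB, hky⟩ ⟨a, b, ha, hb, hab, rfl⟩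
      have hseg : g ∈ openSegment ℝ (k₁.comp Y.subtypeL) (k₂.comp Y.subtypeL) := by
        refine ⟨a, b, ha, hb, hab, ?_⟩
        ext y
        have := hky y
        simpa using this
      obtain ⟨e1, e2⟩ := (mem_extremePoints.1 hg).2 _ (hres k₁ hk₁) _ (hres k₂ hk₂) hseg
      exact ⟨hk₁, fun y => by rw [← e1]; rfl⟩
  obtain ⟨e, heE, heM⟩ := exists_extreme_face hne hcl hext
  exact ⟨e, heE, heM.2⟩



variable {V : Type*} [NormedAddCommGroup V] [NormedSpace ℝ V]

/-- An extreme point of the unit ball has norm one (provided there is some unit vector). -/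
lemma extreme_norm_one {g : V} (hg : g ∈ extremePoints ℝ (closedBall (0 : V) 1))
    (hu : ∃ u : V, ‖u‖ = 1) : ‖g‖ = 1 := by
  obtain ⟨u, hu1⟩ := hu
  have hgle : ‖g‖ ≤ 1 := mem_closedBall_zero_iff.1 (extremePoints_subset hg)
  by_contra hne
  have hlt : ‖g‖ < 1 := lt_of_le_of_ne hgle hne
  set ε : ℝ := 1 - ‖g‖ with hε
  have hεpos : 0 < ε := by simp [hε]; linarith
  have ha : g + ε • u ∈ closedBall (0 : V) 1 := by
    rw [mem_closedBall_zero_iff]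
    calc ‖g + ε • u‖ ≤ ‖g‖ + ‖ε • u‖ := norm_add_le _ _
    _ = ‖g‖ + ε := by rw [norm_smul, hu1]; simp [abs_of_pos hεpos]
    _ = 1 := by simp [hε]
  have hb : g - ε • u ∈ closedBall (0 : V) 1 := by
    rw [mem_closedBall_zero_iff]
    calc ‖g - ε • u‖ ≤ ‖g‖ + ‖ε • u‖ := norm_sub_le _ _
    _ = ‖g‖ + ε := by rw [norm_smul, hu1]; simp [abs_of_pos hεpos]
    _ = 1 := by simp [hε]
  have hseg : g ∈ openSegment ℝ (g + ε • u) (g - ε • u) := by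
    refine ⟨1/2, 1/2, by norm_num, by norm_num, by norm_num, ?_⟩
    module
  have := (hg.2 ha hb hseg)
  have : ε • u = 0 := by
    have h' := congrArg (fun v => v - g) this
    simpa using h'
  rw [smul_eq_zero] at this
  rcases this with h | h
  · exact hεpos.ne' h
  · rw [h] at hu1; simp at hu1
/-- A norm-one functional on a nontrivial finite-dimensional space attains its norm. -/
lemma exists_norming_point (V : Type*) [NormedAddCommGroup V] [NormedSpace ℝ V]
    [FiniteDimensional ℝ V] [Nontrivial V]
    (κ : StrongDual ℝ V) (hκ : ‖κ‖ = 1) : ∃ x : V, ‖x‖ = 1 ∧ κ x = 1 := by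
  have hsne : (sphere (0 : V) 1).Nonempty := NormedSpace.sphere_nonempty.2 zero_le_one
  obtain ⟨x₀, hx₀mem, hx₀max'⟩ := (isCompact_sphere (0 : V) 1).exists_isMaxOn hsne
    (κ.continuous.continuousOn)
  have hx₀max : ∀ y ∈ sphere (0 : V) 1, κ y ≤ κ x₀ := fun y hy => hx₀max' hy
  have hx₀ : ‖x₀‖ = 1 := mem_sphere_zero_iff_norm.1 hx₀mem
  have habs : ∀ y : V, |κ y| ≤ κ x₀ * ‖y‖ := by
    intro y
    rcases eq_or_ne y 0 with rfl | hy
    · simp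
    · have hyn : ‖y‖ ≠ 0 := norm_ne_zero_iff.2 hy
      have h1 : (‖y‖⁻¹ • y) ∈ sphere (0 : V) 1 := by
        rw [mem_sphere_zero_iff_norm, norm_smul]
        simp [abs_of_nonneg (inv_nonneg.2 (norm_nonneg y)), inv_mul_cancel₀ hyn]
      have h2 : (-(‖y‖⁻¹ • y)) ∈ sphere (0 : V) 1 := by
        rwa [mem_sphere_zero_iff_norm, norm_neg, ← mem_sphere_zero_iff_norm]
      have e1 := hx₀max _ h1
      have e2 := hx₀max _ h2
      rw [map_neg] at e2
      rw [map_smul] at e1 e2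
      simp only [smul_eq_mul] at e1 e2
      have hpos : 0 < ‖y‖ := norm_pos_iff.mpr hy
      have e1' : κ y ≤ ‖y‖ * κ x₀ := by
        have := mul_le_mul_of_nonneg_left e1 hpos.le
        rwa [← mul_assoc, mul_inv_cancel₀ hyn, one_mul] at this
      have e2' : -κ y ≤ ‖y‖ * κ x₀ := by
        have := mul_le_mul_of_nonneg_left e2 hpos.le
        rwa [mul_neg, ← mul_assoc, mul_inv_cancel₀ hyn, one_mul] at this
      rw [mul_comm]
      exact abs_le.2 ⟨by linarith, e1'⟩
  have hub : ‖κ‖ ≤ κ x₀ := by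
    apply ContinuousLinearMap.opNorm_le_bound
    · have h1 := habs x₀
      rw [hx₀, mul_one] at h1
      exact (abs_nonneg _).trans h1
    · intro y
      rw [Real.norm_eq_abs]
      exact habs y
  refine ⟨x₀, hx₀, le_antisymm ?_ ?_⟩
  · calc κ x₀ ≤ |κ x₀| := le_abs_self _
    _ ≤ ‖κ‖ * ‖x₀‖ := κ.le_opNorm x₀
    _ = 1 := by rw [hκ, hx₀, mul_one]
  · rw [← hκ]; exact hub



variable {V : Type*} [NormedAddCommGroup V] [NormedSpace ℝ V]

/-- Produce, from the reflexivity of a finite-dimensional space, a vector realizing a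
functional on the dual. -/
lemma exists_eval_vector (V : Type*) [NormedAddCommGroup V] [NormedSpace ℝ V]
    [FiniteDimensional ℝ V]
    (F : StrongDual ℝ (StrongDual ℝ V)) :
    ∃ z : V, ∀ γ : StrongDual ℝ V, γ z = F γ := by
  let e : (V →ₗ[ℝ] ℝ) ≃ₗ[ℝ] (V →L[ℝ] ℝ) := LinearMap.toContinuousLinearMap
  let G : Module.Dual ℝ (Module.Dual ℝ V) := F.toLinearMap.comp e.toLinearMap
  refine ⟨(Module.evalEquiv ℝ V).symm G, fun γ => ?_⟩
  have h1 : γ.toLinearMap ((Module.evalEquiv ℝ V).symm G) = G γ.toLinearMap :=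
    Module.apply_evalEquiv_symm_apply ℝ V γ.toLinearMap G
  have h2 : e γ.toLinearMap = γ := by
    apply ContinuousLinearMap.ext
    intro v
    rfl
  calc γ ((Module.evalEquiv ℝ V).symm G) = γ.toLinearMap ((Module.evalEquiv ℝ V).symm G) := rfl
  _ = G γ.toLinearMap := h1
  _ = F (e γ.toLinearMap) := rfl
  _ = F γ := by rw [h2]

/-- Supporting functional at an accumulation point of extreme points of a convex set. -/
lemma exists_support [FiniteDimensional ℝ V]
    {Γ : Set V} (hconv : Convex ℝ Γ) {κ : V} (hκ : κ ∈ Γ)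
    (g : ℕ → V) (hg : ∀ j, g j ∈ extremePoints ℝ Γ) (hinj : Function.Injective g)
    (hlim : Tendsto g atTop (𝓝 κ)) :
    ∃ F : V →L[ℝ] ℝ, (∀ γ ∈ Γ, F γ ≤ F κ) ∧ (∃ γ ∈ Γ, F γ < F κ) := by
  classical
  set W : Submodule ℝ V := vectorSpan ℝ Γ with hW
  set T : Set ↥W := {w : ↥W | (w : V) + κ ∈ Γ} with hT
  have hmemW : ∀ {γ : V}, γ ∈ Γ → γ - κ ∈ W := by
    intro γ hγ
    have := vsub_mem_vectorSpan ℝ hγ hκ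
    simpa using this
  have h0T : (0 : ↥W) ∈ T := by simp [hT, hκ]
  have hTconv : Convex ℝ T := by
    intro w₁ h₁ w₂ h₂ a b ha hb hab
    have hmem := hconv h₁ h₂ ha hb hab
    have hb' : b = 1 - a := by linarith
    subst hb'
    have : ((a • w₁ + (1 - a) • w₂ : ↥W) : V) + κ
        = a • ((w₁ : V) + κ) + (1 - a) • ((w₂ : V) + κ) := by
      push_cast
      module
    show ((a • w₁ + (1 - a) • w₂ : ↥W) : V) + κ ∈ Γ
    rw [this]
    exact hmem
  -- T spans W
  have hspan : Submodule.span ℝ ((↑) '' T : Set V) = W := by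
    apply le_antisymm
    · rw [Submodule.span_le]
      rintro _ ⟨w, hw, rfl⟩
      exact w.2
    · show vectorSpan ℝ Γ ≤ _
      rw [vectorSpan_def, Submodule.span_le]
      rintro v ⟨γ₁, hγ₁, γ₂, hγ₂, rfl⟩
      have m1 : γ₁ - κ ∈ Submodule.span ℝ ((↑) '' T : Set V) :=
        Submodule.subset_span ⟨⟨γ₁ - κ, hmemW hγ₁⟩, by simp [hT, hγ₁], rfl⟩
      have m2 : γ₂ - κ ∈ Submodule.span ℝ ((↑) '' T : Set V) :=
        Submodule.subset_span ⟨⟨γ₂ - κ, hmemW hγ₂⟩, by simp [hT, hγ₂], rfl⟩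
      show γ₁ -ᵥ γ₂ ∈ Submodule.span ℝ (Subtype.val '' T)
      have heq : γ₁ -ᵥ γ₂ = (γ₁ - κ) - (γ₂ - κ) := by simp
      rw [heq]
      exact Submodule.sub_mem _ m1 m2
  have hspanT : Submodule.span ℝ T = (⊤ : Submodule ℝ ↥W) := by
    apply Submodule.map_injective_of_injective (W.injective_subtype)
    rw [Submodule.map_span]
    rw [Submodule.map_subtype_top]
    exact hspan
  have haff : affineSpan ℝ T = (⊤ : AffineSubspace ℝ ↥W) := by
    have hvs : vectorSpan ℝ T = (⊤ : Submodule ℝ ↥W) := by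
      apply le_antisymm le_top
      rw [← hspanT]
      apply Submodule.span_le.2
      intro w hw
      have : w = w -ᵥ (0 : ↥W) := by simp
      rw [this]
      apply vsub_mem_vectorSpan ℝ hw h0T
    ext w
    simp only [AffineSubspace.mem_top, iff_true]
    have h0 : (0 : ↥W) ∈ affineSpan ℝ T := subset_affineSpan ℝ T h0T
    have : w ∈ (affineSpan ℝ T).direction := by
      rw [direction_affineSpan, hvs]; trivial
    have := AffineSubspace.vadd_mem_of_mem_direction this h0
    simpa using this
  have hint : (interior T).Nonempty := by
    rw [hTconv.interior_nonempty_iff_affineSpan_eq_top]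
    exact haff
  -- 0 is not in the interior of T
  have h0ni : (0 : ↥W) ∉ interior T := by
    intro h0i
    obtain ⟨ε, hεpos, hball⟩ := Metric.isOpen_iff.1 isOpen_interior 0 h0i
    -- pick j with g j ≠ κ and ‖g j - κ‖ < ε/2
    have hev : ∀ᶠ j in atTop, dist (g j) κ < ε / 2 :=
      (Metric.tendsto_nhds.1 hlim) (ε / 2) (by positivity)
    obtain ⟨N, hN⟩ := eventually_atTop.1 hev
    have : ∃ j, N ≤ j ∧ g j ≠ κ := by
      by_contra hcon
      push_neg at hcon
      have := hinj (Eq.trans (hcon N le_rfl) (hcon (N + 1) (by omega)).symm)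
      omega
    obtain ⟨j, hjN, hjne⟩ := this
    set w : ↥W := ⟨g j - κ, hmemW (extremePoints_subset (hg j))⟩ with hw
    have hwne : w ≠ 0 := by
      intro h
      apply hjne
      have : g j - κ = 0 := congrArg Subtype.val h
      exact sub_eq_zero.1 this
    have hwT : w ∈ T := by
      show (w : V) + κ ∈ Γ
      simp [hw]
      exact extremePoints_subset (hg j)
    have h2w : (2 : ℝ) • w ∈ T := by
      apply interior_subset
      apply hball
      rw [Metric.mem_ball, dist_zero_right, norm_smul]
      have : ‖w‖ = ‖g j - κ‖ := rfl
      rw [this]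
      have := hN j hjN
      rw [dist_eq_norm] at this
      simp only [Real.norm_ofNat]
      linarith
    -- g j is the midpoint of κ and κ + 2 (g j - κ)
    have hseg : g j ∈ openSegment ℝ κ (((2 : ℝ) • w : ↥W) + κ) := by
      refine ⟨1/2, 1/2, by norm_num, by norm_num, by norm_num, ?_⟩
      push_cast [hw]
      module
    have := ((hg j).2 hκ h2w hseg)
    exact hjne this.symm
  -- separate
  obtain ⟨f, hf⟩ := geometric_hahn_banach_open_point (hTconv.interior) isOpen_interior h0ni
  rw [map_zero] at hf
  -- f ≤ 0 on T
  obtain ⟨w₀, hw₀⟩ := hint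
  have hfT : ∀ w ∈ T, f w ≤ 0 := by
    intro w hwT
    set p : ℕ → ↥W := fun n => ((n : ℝ) + 2)⁻¹ • w₀ + (1 - ((n : ℝ) + 2)⁻¹) • w with hp
    have hpmem : ∀ n, p n ∈ interior T := by
      intro n
      have hden : (0:ℝ) < (n:ℝ) + 2 := by positivity
      show ((n : ℝ) + 2)⁻¹ • w₀ + (1 - ((n : ℝ) + 2)⁻¹) • w ∈ interior T
      apply hTconv.combo_interior_self_mem_interior hw₀ hwT
      · positivity
      · rw [sub_nonneg, inv_le_one_iff₀]
        right; linarith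
      · ring
    have h1 : Tendsto (fun n : ℕ => ((n:ℝ) + 2)⁻¹) atTop (𝓝 0) :=
      tendsto_inv_atTop_zero.comp
        (tendsto_atTop_add_const_right _ 2 tendsto_natCast_atTop_atTop)
    have h2 : Tendsto (fun n : ℕ => (1 - ((n:ℝ) + 2)⁻¹)) atTop (𝓝 1) := by
      have := h1.const_sub 1
      simpa using this
    have hplim : Tendsto p atTop (𝓝 w) := by
      have := (h1.smul_const w₀).add (h2.smul_const w)
      rw [zero_smul, one_smul, zero_add] at this
      exact this
    have := le_of_tendsto ((f.continuous.tendsto w).comp hplim)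
      (Eventually.of_forall fun n => (hf _ (hpmem n)).le)
    exact this
  -- extend f to V
  obtain ⟨F, hFw, _⟩ := exists_extension_norm_eq W f
  refine ⟨F, ?_, ?_⟩
  · intro γ hγ
    have : F γ - F κ = f ⟨γ - κ, hmemW hγ⟩ := by
      rw [← hFw ⟨γ - κ, hmemW hγ⟩]
      simp [map_sub]
    have hle := hfT ⟨γ - κ, hmemW hγ⟩ (by simp [hT, hγ])
    linarith [this ▸ hle]
  · have hw₀T : w₀ ∈ T := interior_subset hw₀
    refine ⟨(w₀ : V) + κ, hw₀T, ?_⟩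
    have : F ((w₀ : V) + κ) - F κ = f w₀ := by
      rw [← hFw w₀]
      simp [map_add]
    have hlt := hf w₀ hw₀
    linarith [this]

section FaceY

variable {X : Type*} [NormedAddCommGroup X] [NormedSpace ℝ X]
variable (Y : Subspace ℝ X)

/-- The face of the dual ball of `Y` determined by a unit vector `x`. -/
def faceY (x : ↥Y) : Set (StrongDual ℝ ↥Y) := {g | ‖g‖ ≤ 1 ∧ g x = 1}

variable {Y}

lemma faceY_nonempty {x : ↥Y} (hx : ‖x‖ = 1) : (faceY Y x).Nonempty := by
  have hx0 : x ≠ 0 := by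
    intro h; rw [h, norm_zero] at hx; exact one_ne_zero hx.symm
  obtain ⟨g, hg1, hgx⟩ := exists_dual_vector ℝ x (norm_ne_zero_iff.2 hx0)
  exact ⟨g, hg1.le, by rw [hgx, hx]; norm_num⟩

lemma faceY_convex (x : ↥Y) : Convex ℝ (faceY Y x) := by
  rintro g₁ ⟨hg₁n, hg₁x⟩ g₂ ⟨hg₂n, hg₂x⟩ a b ha hb hab
  constructor
  · calc ‖a • g₁ + b • g₂‖ ≤ ‖a • g₁‖ + ‖b • g₂‖ := norm_add_le _ _
    _ = a * ‖g₁‖ + b * ‖g₂‖ := by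
        rw [norm_smul, norm_smul, Real.norm_eq_abs, Real.norm_eq_abs,
          abs_of_nonneg ha, abs_of_nonneg hb]
    _ ≤ a * 1 + b * 1 := by
        apply add_le_add (mul_le_mul_of_nonneg_left hg₁n ha)
          (mul_le_mul_of_nonneg_left hg₂n hb)
    _ = 1 := by rw [mul_one, mul_one, hab]
  · show (a • g₁ + b • g₂) x = 1
    simp only [ContinuousLinearMap.add_apply, ContinuousLinearMap.coe_smul',
      Pi.smul_apply, smul_eq_mul, hg₁x, hg₂x]
    rw [mul_one, mul_one, hab]

lemma faceY_isClosed (x : ↥Y) : IsClosed (faceY Y x) := by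
  have h1 : IsClosed {g : StrongDual ℝ ↥Y | ‖g‖ ≤ 1} := by
    have : {g : StrongDual ℝ ↥Y | ‖g‖ ≤ 1} = closedBall 0 1 := by
      ext g; simp [mem_closedBall_zero_iff]
    rw [this]; exact isClosed_closedBall
  have h2 : IsClosed {g : StrongDual ℝ ↥Y | g x = 1} :=
    isClosed_eq ((NormedSpace.inclusionInDoubleDual ℝ ↥Y x).continuous) continuous_const
  exact h1.inter h2

lemma faceY_subset_ball (x : ↥Y) :
    faceY Y x ⊆ closedBall (0 : StrongDual ℝ ↥Y) 1 := by
  intro g hg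
  exact mem_closedBall_zero_iff.2 hg.1

lemma mem_extremePoints_of_subset {W : Type*} [AddCommGroup W] [Module ℝ W]
    {s t : Set W} {e : W} (h : e ∈ extremePoints ℝ t) (hst : s ⊆ t) (he : e ∈ s) :
    e ∈ extremePoints ℝ s :=
  ⟨he, fun _ hx _ hy hseg => h.2 (hst hx) (hst hy) hseg⟩

/-- Restrictions of norm-one functionals on `X` belonging to the face of `x` restrict
into `faceY Y x`. -/
lemma restriction_mem_faceY {x : ↥Y} (k : StrongDual ℝ X)
    (hk : ‖k‖ ≤ 1) (hkx : k (x : X) = 1) : (k.comp Y.subtypeL) ∈ faceY Y x := by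
  constructor
  · calc ‖k.comp Y.subtypeL‖ ≤ ‖k‖ * ‖Y.subtypeL‖ := k.opNorm_comp_le _
    _ ≤ 1 * 1 := mul_le_mul hk (Submodule.norm_subtypeL_le Y)
        (ContinuousLinearMap.opNorm_nonneg _) zero_le_one
    _ = 1 := one_mul _
  · exact hkx

/-- The key affineness property of the norm on the ray `x + t z`, assuming (BD). -/
lemma affine_ray (hbd : BD X) [FiniteDimensional ℝ ↥Y] (x z : ↥Y) (hx : ‖x‖ = 1) {c : ℝ}
    (hgr : IsGreatest ((fun g : StrongDual ℝ ↥Y => g z) '' faceY Y x) c) :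
    ∃ δ > 0, ∀ t : ℝ, 0 < t → t ≤ δ → ‖x + t • z‖ = 1 + t * c := by
  have hxX : ‖(x : X)‖ = 1 := hx
  obtain ⟨θ₀, hθ₀lt, hθ₀⟩ := bd_key hbd (x : X) hxX
  set θ : ℝ := max θ₀ 0 with hθdef
  have hθlt : θ < 1 := by
    apply max_lt hθ₀lt one_pos
  have hθ0 : 0 ≤ θ := le_max_right _ _
  have hθkey : ∀ k ∈ extBdual X, k (x : X) ≠ 1 → k (x : X) ≤ θ :=
    fun k hk hkx => (hθ₀ k hk hkx).trans (le_max_left _ _)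
  set D : ℝ := 1 + |c| + ‖z‖ with hD
  have hDpos : 0 < D := by positivity
  have h1θ : 0 < 1 - θ := by linarith
  refine ⟨(1 - θ) / D, div_pos h1θ hDpos, ?_⟩
  intro t ht htle
  have htD : t * D ≤ 1 - θ := (le_div_iff₀ hDpos).1 htle
  -- upper bound for t ‖z‖ etc.
  have hge : 1 + t * c ≤ ‖x + t • z‖ := by
    obtain ⟨⟨g₀, hg₀Γ, hg₀z'⟩, _⟩ := hgr
    have hg₀z : g₀ z = c := hg₀z'
    have : g₀ (x + t • z) = 1 + t * c := by
      rw [map_add, map_smul, hg₀Γ.2, smul_eq_mul, hg₀z]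
    calc 1 + t * c = g₀ (x + t • z) := this.symm
    _ ≤ |g₀ (x + t • z)| := le_abs_self _
    _ ≤ ‖g₀‖ * ‖x + t • z‖ := g₀.le_opNorm _
    _ ≤ 1 * ‖x + t • z‖ := mul_le_mul_of_nonneg_right hg₀Γ.1 (norm_nonneg _)
    _ = ‖x + t • z‖ := one_mul _
  by_contra hne
  have hgt : 1 + t * c < ‖x + t • z‖ := lt_of_le_of_ne hge fun h => hne h.symm
  -- move to X
  set w : X := (x : X) + t • (z : X) with hw
  have hwcoe : ((x + t • z : ↥Y) : X) = w := by push_cast; rfl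
  have hwn : ‖w‖ = ‖x + t • z‖ := by rw [← hwcoe]; rfl
  have hexp : t * D = t + t * |c| + t * ‖z‖ := by rw [hD]; ring
  have htc1 : t * |c| < 1 := by
    have hz0 : 0 ≤ t * ‖z‖ := mul_nonneg ht.le (norm_nonneg (z : ↥Y))
    linarith
  have htc2 : -(t * |c|) ≤ t * c := by
    nlinarith [mul_le_mul_of_nonneg_left (neg_abs_le c) ht.le]
  have hwpos : 0 < ‖w‖ := by
    rw [hwn]
    calc (0:ℝ) < 1 + t * c := by linarith
    _ < ‖x + t • z‖ := hgt
  obtain ⟨e, heE, hew⟩ := exists_extreme_norming w (norm_pos_iff.1 hwpos)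
  have heB : ‖e‖ ≤ 1 := extBdual_norm_le heE
  have hez : e (z : X) ≤ ‖z‖ := by
    calc e (z : X) ≤ |e (z : X)| := le_abs_self _
    _ ≤ ‖e‖ * ‖(z : X)‖ := e.le_opNorm _
    _ ≤ 1 * ‖z‖ := by
        have : ‖(z : X)‖ = ‖z‖ := rfl
        rw [this] at *
        exact mul_le_mul_of_nonneg_right heB (norm_nonneg _)
    _ = ‖z‖ := one_mul _
  have hexne : e (x : X) ≠ 1 := by
    intro hex
    have hmem := restriction_mem_faceY (Y := Y) e heB hex
    have : e (z : X) ≤ c := hgr.2 ⟨e.comp Y.subtypeL, hmem, rfl⟩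
    have : e w ≤ 1 + t * c := by
      rw [hw, map_add, map_smul, hex, smul_eq_mul]
      nlinarith
    rw [hew, hwn] at this
    linarith
  have hbound : θ < e (x : X) := by
    have h1 : e (x : X) = e w - t * e (z : X) := by
      rw [hw, map_add, map_smul, smul_eq_mul]; ring
    have h2 : e w > 1 + t * c := by rw [hew, hwn]; exact hgt
    have h3 : t * e (z : X) ≤ t * ‖z‖ := mul_le_mul_of_nonneg_left hez ht.le
    have h4 : 1 + t * c - t * ‖z‖ ≥ 1 - t * (|c| + ‖z‖) := by
      nlinarith [neg_abs_le c]
    have h5 : t * (|c| + ‖z‖) < 1 - θ := by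
      have : t * (|c| + ‖z‖) < t * D := by
        apply mul_lt_mul_of_pos_left _ ht
        rw [hD]; linarith
      linarith
    linarith
  exact absurd (hθkey e heE hexne) (not_le.2 hbound)

end FaceY

section Induction

variable {X : Type*} [NormedAddCommGroup X] [NormedSpace ℝ X]
variable {Y : Subspace ℝ X}

lemma faceY_subsingleton_of_dim_zero [FiniteDimensional ℝ ↥Y] {x : ↥Y}
    (h : Module.finrank ℝ (vectorSpan ℝ (faceY Y x)) = 0) : (faceY Y x).Subsingleton := by
  intro g₁ h₁ g₂ h₂
  have hmem : g₁ - g₂ ∈ vectorSpan ℝ (faceY Y x) := by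
    have := vsub_mem_vectorSpan ℝ h₁ h₂
    simpa using this
  have hbot : vectorSpan ℝ (faceY Y x) = ⊥ := Submodule.finrank_eq_zero.1 h
  rw [hbot, Submodule.mem_bot] at hmem
  exact sub_eq_zero.1 hmem

lemma faces_finite (hbd : BD X) [FiniteDimensional ℝ ↥Y] :
    ∀ (d : ℕ), ∀ (x : ↥Y), ‖x‖ = 1 →
      Module.finrank ℝ (vectorSpan ℝ (faceY Y x)) ≤ d →
      (extremePoints ℝ (closedBall (0 : StrongDual ℝ ↥Y) 1) ∩ faceY Y x).Finite := by
  intro d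
  induction d with
  | zero =>
    intro x hx hdim
    have hsub := faceY_subsingleton_of_dim_zero (Y := Y) (x := x) (Nat.le_zero.1 hdim)
    exact (hsub.anti inter_subset_right).finite
  | succ d ih =>
    intro x hx hdim
    by_contra hinf'
    have hinf : (extremePoints ℝ (closedBall (0 : StrongDual ℝ ↥Y) 1)
        ∩ faceY Y x).Infinite := hinf'
    set S := extremePoints ℝ (closedBall (0 : StrongDual ℝ ↥Y) 1) ∩ faceY Y x with hS
    have hSsub : S ⊆ faceY Y x := inter_subset_right
    have hSball : S ⊆ closedBall (0 : StrongDual ℝ ↥Y) 1 :=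
      fun g hg => extremePoints_subset hg.1
    let emb : ℕ ↪ ↥S := Set.Infinite.natEmbedding _ hinf
    set g : ℕ → StrongDual ℝ ↥Y := fun j => ((emb j : ↥S) : StrongDual ℝ ↥Y)
      with hgdef
    have hgS : ∀ j, g j ∈ S := fun j => (emb j).2
    have hginj : Function.Injective g := by
      intro i j hij
      exact emb.injective (Subtype.ext hij)
    have hSbdd : Bornology.IsBounded S :=
      (isBounded_closedBall (x := (0 : StrongDual ℝ ↥Y)) (r := 1)).subset hSball
    obtain ⟨κ₀, hκ₀cl, φ, hφ, hgφ⟩ := tendsto_subseq_of_bounded hSbdd hgS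
    have hκ₀Γ : κ₀ ∈ faceY Y x :=
      ((faceY_isClosed x).closure_subset_iff.2 hSsub) hκ₀cl
    set g' : ℕ → StrongDual ℝ ↥Y := g ∘ φ with hg'def
    have hg'inj : Function.Injective g' := hginj.comp hφ.injective
    have hg'S : ∀ j, g' j ∈ S := fun j => hgS (φ j)
    have hg'ext : ∀ j, g' j ∈ extremePoints ℝ (faceY Y x) := fun j =>
      mem_extremePoints_of_subset (hg'S j).1 (faceY_subset_ball x) (hg'S j).2
    obtain ⟨F, hFle, γ', hγ'Γ, hγ'lt⟩ :=
      exists_support (faceY_convex x) hκ₀Γ g' hg'ext hg'inj hgφ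
    obtain ⟨z, hz⟩ := exists_eval_vector ↥Y F
    set c : ℝ := κ₀ z with hc
    have hgr : IsGreatest ((fun g : StrongDual ℝ ↥Y => g z) '' faceY Y x) c := by
      constructor
      · exact ⟨κ₀, hκ₀Γ, rfl⟩
      · rintro v ⟨γ, hγ, rfl⟩
        show γ z ≤ κ₀ z
        rw [hz γ, hz κ₀]
        exact hFle γ hγ
    obtain ⟨δ, hδpos, hray⟩ := affine_ray hbd x z hx hgr
    set t : ℝ := min δ (1 / (2 * (1 + |c|))) with ht'
    have htpos : 0 < t := lt_min hδpos (by positivity)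
    have ht1 : ‖x + t • z‖ = 1 + t * c := hray t htpos (min_le_left _ _)
    have htc : 0 < 1 + t * c := by
      have h1 : t ≤ 1 / (2 * (1 + |c|)) := min_le_right _ _
      have hc1 : (0:ℝ) < 2 * (1 + |c|) := by positivity
      rw [le_div_iff₀ hc1] at h1
      have h2 : t * |c| ≤ 1/2 := by nlinarith [abs_nonneg c]
      have h3 : -(t * |c|) ≤ t * c := by
        nlinarith [mul_le_mul_of_nonneg_left (neg_abs_le c) htpos.le]
      linarith
    set x' : ↥Y := (1 + t * c)⁻¹ • (x + t • z) with hx'def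
    have hx'1 : ‖x'‖ = 1 := by
      rw [hx'def, norm_smul, Real.norm_eq_abs, abs_of_pos (inv_pos.2 htc), ht1,
        inv_mul_cancel₀ htc.ne']
    have hx'eval : ∀ γ : StrongDual ℝ ↥Y, γ x' = (1 + t * c)⁻¹ * (γ x + t * γ z) := by
      intro γ
      rw [hx'def, map_smul, map_add, map_smul]
      simp [smul_eq_mul]
    have hκ₀x : κ₀ x = 1 := hκ₀Γ.2
    have hκ₀x' : κ₀ x' = 1 := by
      rw [hx'eval, hκ₀x, ← hc, inv_mul_cancel₀ htc.ne']
    have hface' : ∀ γ ∈ faceY Y x, (γ ∈ faceY Y x' ↔ γ z = c) := by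
      intro γ hγ
      constructor
      · intro hγ'
        have h1 : γ x' = 1 := hγ'.2
        rw [hx'eval, hγ.2] at h1
        field_simp at h1
        have h2 : t * γ z = t * c := by linarith
        exact mul_left_cancel₀ htpos.ne' h2
      · intro hγz
        refine ⟨hγ.1, ?_⟩
        rw [hx'eval, hγ.2, hγz, inv_mul_cancel₀ htc.ne']
    set m : ↥Y := (2:ℝ)⁻¹ • (x + x') with hmdef
    have hmeval : ∀ γ : StrongDual ℝ ↥Y, γ m = (2:ℝ)⁻¹ * (γ x + γ x') := by
      intro γ
      rw [hmdef, map_smul, map_add]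
      simp [smul_eq_mul]
    have hκ₀m : κ₀ m = 1 := by
      rw [hmeval, hκ₀x, hκ₀x']
      norm_num
    have hm1 : ‖m‖ = 1 := by
      apply le_antisymm
      · rw [hmdef, norm_smul, Real.norm_eq_abs]
        have : ‖x + x'‖ ≤ 2 := by
          calc ‖x + x'‖ ≤ ‖x‖ + ‖x'‖ := norm_add_le _ _
          _ = 2 := by rw [hx, hx'1]; norm_num
        rw [abs_of_pos (by norm_num : (0:ℝ) < (2:ℝ)⁻¹)]
        linarith
      · have h1 : (1:ℝ) = κ₀ m := hκ₀m.symm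
        have h2 : κ₀ m ≤ |κ₀ m| := le_abs_self _
        have h3 : |κ₀ m| ≤ ‖κ₀‖ * ‖m‖ := κ₀.le_opNorm m
        have h4 : ‖κ₀‖ ≤ 1 := hκ₀Γ.1
        nlinarith [norm_nonneg m]
    have hfacem : ∀ γ : StrongDual ℝ ↥Y,
        γ ∈ faceY Y m ↔ γ ∈ faceY Y x ∧ γ ∈ faceY Y x' := by
      intro γ
      constructor
      · rintro ⟨hγn, hγm⟩
        have hb1 : γ x ≤ 1 := by
          calc γ x ≤ |γ x| := le_abs_self _
          _ ≤ ‖γ‖ * ‖x‖ := γ.le_opNorm x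
          _ ≤ 1 := by rw [hx, mul_one]; exact hγn
        have hb2 : γ x' ≤ 1 := by
          calc γ x' ≤ |γ x'| := le_abs_self _
          _ ≤ ‖γ‖ * ‖x'‖ := γ.le_opNorm x'
          _ ≤ 1 := by rw [hx'1, mul_one]; exact hγn
        rw [hmeval] at hγm
        have e1 : γ x = 1 := by linarith
        have e2 : γ x' = 1 := by linarith
        exact ⟨⟨hγn, e1⟩, ⟨hγn, e2⟩⟩
      · rintro ⟨⟨hγn, h1⟩, ⟨_, h2⟩⟩
        refine ⟨hγn, ?_⟩
        rw [hmeval, h1, h2]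
        norm_num
    -- dimension drop
    set Wx : Submodule ℝ (StrongDual ℝ ↥Y) := vectorSpan ℝ (faceY Y x) with hWx
    set ev := NormedSpace.inclusionInDoubleDual ℝ ↥Y z with hev
    set K := LinearMap.ker (ev : StrongDual ℝ ↥Y →ₗ[ℝ] ℝ) with hK
    have hsub : vectorSpan ℝ (faceY Y m) ≤ Wx ⊓ K := by
      rw [vectorSpan_def]
      apply Submodule.span_le.2
      rintro v ⟨γ₁, hγ₁, γ₂, hγ₂, rfl⟩
      have h1 := (hfacem γ₁).1 hγ₁
      have h2 := (hfacem γ₂).1 hγ₂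
      have hz1 : γ₁ z = c := (hface' γ₁ h1.1).1 h1.2
      have hz2 : γ₂ z = c := (hface' γ₂ h2.1).1 h2.2
      show γ₁ -ᵥ γ₂ ∈ Wx ⊓ K
      apply Submodule.mem_inf.2
      constructor
      · exact vsub_mem_vectorSpan ℝ h1.1 h2.1
      · rw [LinearMap.mem_ker]
        show ev (γ₁ - γ₂) = 0
        have : ev (γ₁ - γ₂) = γ₁ z - γ₂ z := by
          rw [map_sub]; rfl
        rw [this, hz1, hz2, sub_self]
    have hγ'z : γ' z < c := by
      rw [hz γ', hc, hz κ₀]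
      exact hγ'lt
    have hlt : Wx ⊓ K < Wx := by
      apply lt_of_le_of_ne inf_le_left
      intro heq
      have hle : Wx ≤ K := by rw [← heq]; exact inf_le_right
      have hκγ' : κ₀ - γ' ∈ Wx := by
        have := vsub_mem_vectorSpan ℝ hκ₀Γ hγ'Γ
        simpa using this
      have hker := hle hκγ'
      rw [LinearMap.mem_ker, ContinuousLinearMap.coe_coe] at hker
      have : ev (κ₀ - γ') = κ₀ z - γ' z := by rw [map_sub]; rfl
      rw [this] at hker
      have : γ' z = κ₀ z := by linarith
      rw [hc] at hγ'z
      linarith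
    have hrank : Module.finrank ℝ (vectorSpan ℝ (faceY Y m)) ≤ d := by
      have h1 : Module.finrank ℝ ↥(Wx ⊓ K) < Module.finrank ℝ ↥Wx :=
        Submodule.finrank_lt_finrank_of_lt hlt
      have h2 : Module.finrank ℝ ↥(vectorSpan ℝ (faceY Y m)) ≤ Module.finrank ℝ ↥(Wx ⊓ K) :=
        Submodule.finrank_mono hsub
      omega
    have hfinm := ih m hm1 hrank
    -- finitely many j with g' j in the face of m
    have hJfin : {j : ℕ | g' j ∈ faceY Y m}.Finite := by
      have hsub2 : {j : ℕ | g' j ∈ faceY Y m} ⊆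
          g' ⁻¹' (extremePoints ℝ (closedBall (0 : StrongDual ℝ ↥Y) 1) ∩ faceY Y m) := by
        intro j hj
        exact ⟨(hg'S j).1, hj⟩
      exact (hfinm.preimage hg'inj.injOn).subset hsub2
    have hx'X : ‖(x' : X)‖ = 1 := hx'1
    obtain ⟨θ', hθ'lt, hθ'key⟩ := bd_key hbd (x' : X) hx'X
    have hconv : Tendsto (fun j => g' j x') atTop (𝓝 1) := by
      have hev2 := ((NormedSpace.inclusionInDoubleDual ℝ ↥Y x').continuous.tendsto κ₀).comp hgφ
      have : ((NormedSpace.inclusionInDoubleDual ℝ ↥Y x') κ₀ : ℝ) = 1 := hκ₀x'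
      rw [this] at hev2
      exact hev2
    have hev3 : ∀ᶠ j in atTop, θ' < g' j x' := hconv.eventually (eventually_gt_nhds hθ'lt)
    obtain ⟨N, hN⟩ := eventually_atTop.1 hev3
    have hexj : ∃ j, N ≤ j ∧ g' j ∉ faceY Y m := by
      by_contra hcon
      push_neg at hcon
      have hsub3 : Set.Ici N ⊆ {j : ℕ | g' j ∈ faceY Y m} := fun j hj => hcon j hj
      exact Set.Ici_infinite N (hJfin.subset hsub3)
    obtain ⟨j, hjN, hjm⟩ := hexj
    have hjx : g' j ∈ faceY Y x := (hg'S j).2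
    have hjx' : g' j x' ≠ 1 := by
      intro h1
      exact hjm ((hfacem (g' j)).2 ⟨hjx, ⟨hjx.1, h1⟩⟩)
    obtain ⟨e, heE, heres⟩ := exists_extreme_restrict Y (g' j) (hg'S j).1
    have hex' : e (x' : X) = g' j x' := heres x'
    have hle := hθ'key e heE (by rw [hex']; exact hjx')
    rw [hex'] at hle
    exact absurd (hN j hjN) (not_lt.2 hle)

end Induction

section Covering

variable {X : Type*} [NormedAddCommGroup X] [NormedSpace ℝ X]
variable {Y : Subspace ℝ X}

lemma extY_finite (hbd : BD X) [FiniteDimensional ℝ ↥Y] [Nontrivial ↥Y] :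
    (extremePoints ℝ (closedBall (0 : StrongDual ℝ ↥Y) 1)).Finite := by
  classical
  set Ext := extremePoints ℝ (closedBall (0 : StrongDual ℝ ↥Y) 1) with hExt
  have hu : ∃ u : StrongDual ℝ ↥Y, ‖u‖ = 1 := by
    obtain ⟨y, hy⟩ := exists_ne (0 : ↥Y)
    obtain ⟨gdual, h1, _⟩ := exists_dual_vector ℝ y (norm_ne_zero_iff.2 hy)
    exact ⟨gdual, h1⟩
  have hnorm1 : ∀ g ∈ Ext, ‖g‖ = 1 := fun g hg => extreme_norm_one hg hu
  set C := closure Ext with hC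
  have hCcomp : IsCompact C := by
    apply Metric.isCompact_of_isClosed_isBounded isClosed_closure
    apply Bornology.IsBounded.closure
    apply (isBounded_closedBall (x := (0 : StrongDual ℝ ↥Y)) (r := 1)).subset
    exact extremePoints_subset
  have hCn : ∀ κ ∈ C, ‖κ‖ = 1 := by
    have hsub : C ⊆ {g : StrongDual ℝ ↥Y | ‖g‖ = 1} := by
      apply closure_minimal _ (isClosed_eq continuous_norm continuous_const)
      intro g hg
      exact hnorm1 g hg
    exact fun κ hκ => hsub hκ
  have hdata : ∀ κ ∈ C, ∃ x : ↥Y, ‖x‖ = 1 ∧ κ x = 1 := fun κ hκ =>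
    exists_norming_point ↥Y κ (hCn κ hκ)
  choose xf hxf1 hxfκ using hdata
  have hθdata : ∀ κ (hκ : κ ∈ C), ∃ θ : ℝ, θ < 1 ∧
      ∀ k ∈ extBdual X, k ((xf κ hκ : ↥Y) : X) ≠ 1 → k ((xf κ hκ : ↥Y) : X) ≤ θ := by
    intro κ hκ
    exact bd_key hbd _ (hxf1 κ hκ)
  choose θf hθflt hθfkey using hθdata
  obtain ⟨tf, htf⟩ := hCcomp.elim_nhds_subcover'
    (fun κ hκ => Metric.ball κ ((1 - θf κ hκ) / 2))
    (fun κ hκ => Metric.ball_mem_nhds κ (by linarith [hθflt κ hκ]))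
  have hcover : Ext ⊆ ⋃ κ ∈ tf, (Ext ∩ faceY Y (xf (κ : StrongDual ℝ ↥Y) κ.2)) := by
    intro g hg
    have hgC : g ∈ C := subset_closure hg
    obtain ⟨κ, hκt, hgball⟩ := Set.mem_iUnion₂.1 (htf hgC)
    apply Set.mem_iUnion₂.2
    refine ⟨κ, hκt, hg, ?_⟩
    set x₀ := xf (κ : StrongDual ℝ ↥Y) κ.2 with hx₀
    have hd : dist g (κ : StrongDual ℝ ↥Y) < (1 - θf κ κ.2) / 2 :=
      Metric.mem_ball.1 hgball
    have hgx : θf κ κ.2 < g x₀ := by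
      have h1 : |g x₀ - (κ : StrongDual ℝ ↥Y) x₀| ≤ ‖g - (κ : StrongDual ℝ ↥Y)‖ := by
        have h2 : (g - (κ : StrongDual ℝ ↥Y)) x₀ = g x₀ - (κ : StrongDual ℝ ↥Y) x₀ :=
          rfl
        calc |g x₀ - (κ : StrongDual ℝ ↥Y) x₀|
            = |(g - (κ : StrongDual ℝ ↥Y)) x₀| := by rw [h2]
        _ ≤ ‖g - (κ : StrongDual ℝ ↥Y)‖ * ‖x₀‖ := (g - _).le_opNorm x₀
        _ = ‖g - (κ : StrongDual ℝ ↥Y)‖ := by rw [hxf1 κ κ.2, mul_one]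
      rw [dist_eq_norm] at hd
      have h3 := hxfκ (κ : StrongDual ℝ ↥Y) κ.2
      have h4 := abs_le.1 h1
      have := hθflt κ κ.2
      have h5 : g x₀ ≥ (κ : StrongDual ℝ ↥Y) x₀ - ‖g - (κ : StrongDual ℝ ↥Y)‖ := by
        linarith [h4.1]
      rw [h3] at h5
      linarith
    obtain ⟨e, heE, heres⟩ := exists_extreme_restrict Y g hg
    have hgx1 : g x₀ = 1 := by
      by_contra hne
      have h6 : e ((x₀ : ↥Y) : X) ≠ 1 := by rw [heres x₀]; exact hne
      have h7 := hθfkey κ κ.2 e heE h6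
      rw [heres x₀] at h7
      linarith
    exact ⟨mem_closedBall_zero_iff.1 (extremePoints_subset hg), hgx1⟩
  apply Set.Finite.subset _ hcover
  apply Set.Finite.biUnion (tf.finite_toSet)
  intro κ hκ
  exact faces_finite hbd (Module.finrank ℝ (StrongDual ℝ ↥Y)) _
    (hxf1 (κ : StrongDual ℝ ↥Y) κ.2) (Submodule.finrank_le _)

lemma ball_eq_convexHull (hbd : BD X) [FiniteDimensional ℝ ↥Y] [Nontrivial ↥Y] :
    ∃ F : Set ↥Y, F.Finite ∧ closedBall (0 : ↥Y) 1 = convexHull ℝ F := by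
  classical
  set Ext := extremePoints ℝ (closedBall (0 : StrongDual ℝ ↥Y) 1) with hExt
  have hExtFin : Ext.Finite := extY_finite hbd
  have hchar : ∀ y : ↥Y, ‖y‖ ≤ 1 ↔ ∀ g ∈ Ext, g y ≤ 1 := by
    intro y
    constructor
    · intro hy g hg
      calc g y ≤ |g y| := le_abs_self _
      _ ≤ ‖g‖ * ‖y‖ := g.le_opNorm y
      _ ≤ 1 * 1 := mul_le_mul (mem_closedBall_zero_iff.1 (extremePoints_subset hg)) hy
          (norm_nonneg _) zero_le_one
      _ = 1 := one_mul _
    · intro hall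
      rcases eq_or_ne y 0 with rfl | hy
      · simp
      · obtain ⟨e, heE, hey⟩ := exists_extreme_norming (X := ↥Y) y hy
        rw [← hey]
        exact hall e heE
  set EB := extremePoints ℝ (closedBall (0 : ↥Y) 1) with hEB
  set G : Finset (StrongDual ℝ ↥Y) := hExtFin.toFinset with hG
  have hGmem : ∀ g, g ∈ G ↔ g ∈ Ext := fun g => hExtFin.mem_toFinset
  set A : ↥Y → Finset (StrongDual ℝ ↥Y) := fun e => G.filter (fun g => g e = 1) with hA
  have hinj : Set.InjOn A EB := by
    intro e he e' he' hAe
    by_contra hne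
    have hv : e' - e ≠ 0 := sub_ne_zero.2 (Ne.symm hne)
    have heball : ‖e‖ ≤ 1 := mem_closedBall_zero_iff.1 (extremePoints_subset he)
    have hle : ∀ g ∈ Ext, g e ≤ 1 := (hchar e).1 heball
    set P := G.filter (fun g => g e ≠ 1) with hP
    set m : ℝ := if h : P.Nonempty then P.inf' h (fun g => 1 - g e) else 1 with hm
    have hmpos : 0 < m := by
      rw [hm]
      split_ifs with h
      · rw [Finset.lt_inf'_iff]
        intro g hg
        have hg1 := Finset.mem_filter.1 hg
        have := hle g ((hGmem g).1 hg1.1)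
        have hne1 : g e ≠ 1 := hg1.2
        have : g e < 1 := lt_of_le_of_ne this hne1
        linarith
      · norm_num
    have hmle : ∀ g ∈ Ext, g e ≠ 1 → m ≤ 1 - g e := by
      intro g hg hne1
      have hgP : g ∈ P := Finset.mem_filter.2 ⟨(hGmem g).2 hg, hne1⟩
      rw [hm]
      rw [dif_pos ⟨g, hgP⟩]
      exact Finset.inf'_le _ hgP
    set tt : ℝ := m / (2 * (‖e' - e‖ + 1)) with htt
    have httpos : 0 < tt := by positivity
    have httv : tt * ‖e' - e‖ < m := by
      rw [htt, div_mul_eq_mul_div, div_lt_iff₀ (by positivity)]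
      nlinarith [norm_nonneg (e' - e)]
    have hbound : ∀ g ∈ Ext, |g (tt • (e' - e))| ≤ tt * ‖e' - e‖ := by
      intro g hg
      calc |g (tt • (e' - e))| ≤ ‖g‖ * ‖tt • (e' - e)‖ := g.le_opNorm _
      _ ≤ 1 * ‖tt • (e' - e)‖ :=
          mul_le_mul_of_nonneg_right (mem_closedBall_zero_iff.1 (extremePoints_subset hg))
            (norm_nonneg _)
      _ = tt * ‖e' - e‖ := by
          rw [one_mul, norm_smul, Real.norm_eq_abs, abs_of_pos httpos]
    have hzero : ∀ g ∈ Ext, g e = 1 → g (e' - e) = 0 := by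
      intro g hg hge
      have hgA : g ∈ A e := Finset.mem_filter.2 ⟨(hGmem g).2 hg, hge⟩
      rw [hAe] at hgA
      have hge' : g e' = 1 := (Finset.mem_filter.1 hgA).2
      rw [map_sub, hge, hge', sub_self]
    have hmema : e + tt • (e' - e) ∈ closedBall (0 : ↥Y) 1 := by
      rw [mem_closedBall_zero_iff, hchar]
      intro g hg
      rcases eq_or_ne (g e) 1 with h1 | h1
      · rw [map_add, h1, map_smul, hzero g hg h1]
        simp
      · have h2 := hbound g hg
        have h3 := hmle g hg h1
        rw [map_add]
        have h4 : g (tt • (e' - e)) ≤ |g (tt • (e' - e))| := le_abs_self _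
        linarith
    have hmemb : e - tt • (e' - e) ∈ closedBall (0 : ↥Y) 1 := by
      rw [mem_closedBall_zero_iff, hchar]
      intro g hg
      rcases eq_or_ne (g e) 1 with h1 | h1
      · rw [map_sub, h1, map_smul, hzero g hg h1]
        simp
      · have h2 := hbound g hg
        have h3 := hmle g hg h1
        rw [map_sub]
        have h4 : -g (tt • (e' - e)) ≤ |g (tt • (e' - e))| := neg_le_abs _
        linarith
    have hseg : e ∈ openSegment ℝ (e + tt • (e' - e)) (e - tt • (e' - e)) := by
      refine ⟨1/2, 1/2, by norm_num, by norm_num, by norm_num, ?_⟩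
      module
    have := (he.2 hmema hmemb hseg)
    have hzero2 : tt • (e' - e) = 0 := by
      have h' := congrArg (fun v => v - e) this
      simpa using h'
    rw [smul_eq_zero] at hzero2
    rcases hzero2 with h | h
    · exact httpos.ne' h
    · exact hv h
  have hEBfin : EB.Finite := by
    apply Set.Finite.of_finite_image _ hinj
    apply Set.Finite.subset (G.powerset.finite_toSet)
    rintro _ ⟨e, _, rfl⟩
    rw [Finset.coe_powerset]
    show A e ∈ _
    simp only [Set.mem_preimage, Set.mem_powerset_iff, Finset.coe_subset]
    exact Finset.filter_subset _ _
  have hcomp : IsCompact (closedBall (0 : ↥Y) 1) := isCompact_closedBall _ _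
  have hconv : Convex ℝ (closedBall (0 : ↥Y) 1) := convex_closedBall _ _
  have hKM := closure_convexHull_extremePoints hcomp hconv
  have hclosed : IsClosed (convexHull ℝ EB) := hEBfin.isClosed_convexHull ℝ
  refine ⟨EB, hEBfin, ?_⟩
  rw [← hKM, hclosed.closure_eq]

end Covering

end BDPoly

/-- A real Banach space with property (BD) is polyhedral. -/
theorem polyhedral_of_bd
    {X : Type} [NormedAddCommGroup X] [NormedSpace ℝ X] [CompleteSpace X]
    (hbd : ∀ x : X, ‖x‖ = 1 →
      sSup ((fun f : StrongDual ℝ X => f x) '' (extBdual X \ Dface x)) < 1) :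
    IsPolyhedralSpace X := by
  intro Y hYfd
  by_cases hY : Subsingleton ↥Y
  · refine ⟨{0}, Set.finite_singleton _, ?_⟩
    rw [convexHull_singleton]
    apply Set.eq_of_subset_of_subset
    · intro y _
      simp [Subsingleton.elim y 0]
    · intro y hy
      simp only [Set.mem_singleton_iff] at hy
      rw [hy]
      exact Metric.mem_closedBall_self zero_le_one
  · have hnt : Nontrivial ↥Y := not_subsingleton_iff_nontrivial.1 hY
    exact BDPoly.ball_eq_convexHull (Y := Y) hbd

end
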